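/- The effective Hamiltonian H̄ defined above is even, nondecreasing in |p|, and satisfies H̄(p) ≥ p²/2 − 1 and H̄(p) ≤ p²/2 for all p with |p| ≥ 2√2/π. -/

import Mathlib

open Real

lemma aux13_cont (κ₀ : ℕ) (l : ℝ) :
    Continuous (fun x => Real.sqrt (Real.cos (κ₀ * x / 2) ^ 2 + l)) := by
  continuity

lemma aux13_lb (κ₀ : ℕ) {l : ℝ} (hl : 0 ≤ l) :
    2 * π * Real.sqrt l ≤ ∫ x in (0:ℝ)..(2 * π),
      Real.sqrt (Real.cos (κ₀ * x / 2) ^ 2 + l) := by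
  have h := intervalIntegral.integral_mono_on (μ := MeasureTheory.volume) (a := (0:ℝ)) (b := 2 * π)
    (f := fun _ => Real.sqrt l)
    (g := fun x => Real.sqrt (Real.cos (κ₀ * x / 2) ^ 2 + l))
    (by positivity) (continuous_const.intervalIntegrable _ _)
    ((aux13_cont κ₀ l).intervalIntegrable _ _)
    (fun x _ => Real.sqrt_le_sqrt (by nlinarith [sq_nonneg (Real.cos (κ₀ * x / 2))]))
  simpa [intervalIntegral.integral_const, smul_eq_mul] using h

lemma aux13_ub (κ₀ : ℕ) {l : ℝ} (hl : 0 ≤ l) :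
    (∫ x in (0:ℝ)..(2 * π), Real.sqrt (Real.cos (κ₀ * x / 2) ^ 2 + l))
      ≤ 2 * π * Real.sqrt (1 + l) := by
  have h := intervalIntegral.integral_mono_on (μ := MeasureTheory.volume) (a := (0:ℝ)) (b := 2 * π)
    (f := fun x => Real.sqrt (Real.cos (κ₀ * x / 2) ^ 2 + l))
    (g := fun _ => Real.sqrt (1 + l))
    (by positivity) ((aux13_cont κ₀ l).intervalIntegrable _ _)
    (continuous_const.intervalIntegrable _ _)
    (fun x _ => Real.sqrt_le_sqrt (by nlinarith [Real.cos_sq_le_one (κ₀ * x / 2)]))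
  simpa [intervalIntegral.integral_const, smul_eq_mul] using h

lemma aux13_strict (κ₀ : ℕ) {l₁ l₂ : ℝ} (h1 : 0 ≤ l₁) (h12 : l₁ < l₂) :
    (∫ x in (0:ℝ)..(2 * π), Real.sqrt (Real.cos (κ₀ * x / 2) ^ 2 + l₁))
      < ∫ x in (0:ℝ)..(2 * π), Real.sqrt (Real.cos (κ₀ * x / 2) ^ 2 + l₂) := by
  set D := Real.sqrt (1 + l₂) + Real.sqrt (1 + l₁) with hD
  have hDpos : 0 < D := by positivity
  set ε := (l₂ - l₁) / D with hε
  have hεpos : 0 < ε := div_pos (by linarith) hDpos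
  have key : ∀ x : ℝ,
      Real.sqrt (Real.cos (κ₀ * x / 2) ^ 2 + l₁) + ε
        ≤ Real.sqrt (Real.cos (κ₀ * x / 2) ^ 2 + l₂) := by
    intro x
    set a := Real.cos (κ₀ * x / 2) ^ 2 with ha
    have ha0 : 0 ≤ a := sq_nonneg _
    have ha1 : a ≤ 1 := Real.cos_sq_le_one _
    have hs1 : Real.sqrt (a + l₁) ^ 2 = a + l₁ := Real.sq_sqrt (by linarith)
    have hs2 : Real.sqrt (a + l₂) ^ 2 = a + l₂ := Real.sq_sqrt (by linarith)
    have hb1 : Real.sqrt (a + l₁) ≤ Real.sqrt (1 + l₁) := Real.sqrt_le_sqrt (by linarith)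
    have hb2 : Real.sqrt (a + l₂) ≤ Real.sqrt (1 + l₂) := Real.sqrt_le_sqrt (by linarith)
    have hn1 : 0 ≤ Real.sqrt (a + l₁) := Real.sqrt_nonneg _
    have hn2 : 0 ≤ Real.sqrt (a + l₂) := Real.sqrt_nonneg _
    have hεD : ε * D = l₂ - l₁ := by rw [hε, div_mul_cancel₀ _ hDpos.ne']
    have hspos : 0 < Real.sqrt (a + l₂) + Real.sqrt (a + l₁) := by
      have : 0 < Real.sqrt (a + l₂) := Real.sqrt_pos.2 (by linarith)
      linarith
    have hεs : ε * (Real.sqrt (a + l₂) + Real.sqrt (a + l₁)) ≤ l₂ - l₁ := by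
      calc ε * (Real.sqrt (a + l₂) + Real.sqrt (a + l₁)) ≤ ε * D :=
            mul_le_mul_of_nonneg_left (by rw [hD]; linarith) hεpos.le
        _ = l₂ - l₁ := hεD
    nlinarith [hεs, hspos]
  have h := intervalIntegral.integral_mono_on (μ := MeasureTheory.volume) (a := (0:ℝ)) (b := 2 * π)
    (f := fun x => Real.sqrt (Real.cos (κ₀ * x / 2) ^ 2 + l₁) + ε)
    (g := fun x => Real.sqrt (Real.cos (κ₀ * x / 2) ^ 2 + l₂))
    (by positivity)
    (((aux13_cont κ₀ l₁).add continuous_const).intervalIntegrable _ _)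
    ((aux13_cont κ₀ l₂).intervalIntegrable _ _)
    (fun x _ => key x)
  have hadd : (∫ x in (0:ℝ)..(2 * π),
      (Real.sqrt (Real.cos (κ₀ * x / 2) ^ 2 + l₁) + ε))
      = (∫ x in (0:ℝ)..(2 * π), Real.sqrt (Real.cos (κ₀ * x / 2) ^ 2 + l₁))
        + 2 * π * ε := by
    rw [intervalIntegral.integral_add ((aux13_cont κ₀ l₁).intervalIntegrable _ _)
      (continuous_const.intervalIntegrable 0 (2 * π))]
    simp [intervalIntegral.integral_const, smul_eq_mul]
  rw [hadd] at h
  have : 0 < 2 * π * ε := by positivity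
  linarith

theorem stmt13 (κ₀ : ℕ) (hκ : 0 < κ₀) (Hbar : ℝ → ℝ)
    (hcont : Continuous Hbar)
    (hsmall : ∀ p : ℝ, |p| ≤ 2 * Real.sqrt 2 / π → Hbar p = 0)
    (hbig : ∀ p : ℝ, 2 * Real.sqrt 2 / π ≤ |p| →
      0 ≤ Hbar p ∧
      |p| = (Real.sqrt 2 / (2 * π)) * ∫ x in (0)..(2 * π),
          Real.sqrt (Real.cos (κ₀ * x / 2) ^ 2 + Hbar p)) :
    (∀ p : ℝ, Hbar (-p) = Hbar p) ∧
    (∀ p q : ℝ, |p| ≤ |q| → Hbar p ≤ Hbar q) ∧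
    (∀ p : ℝ, 2 * Real.sqrt 2 / π ≤ |p| →
      p ^ 2 / 2 - 1 ≤ Hbar p ∧ Hbar p ≤ p ^ 2 / 2) := by
  have hπ : (0:ℝ) < π := Real.pi_pos
  have hcoef : (0:ℝ) < Real.sqrt 2 / (2 * π) := by positivity
  -- monotone helper
  have mono : ∀ p q : ℝ, |p| ≤ |q| → 2 * Real.sqrt 2 / π ≤ |p| →
      Hbar p ≤ Hbar q := by
    intro p q hpq hp
    obtain ⟨hp0, hpI⟩ := hbig p hp
    obtain ⟨hq0, hqI⟩ := hbig q (le_trans hp hpq)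
    by_contra hlt
    push_neg at hlt
    have := aux13_strict κ₀ hq0 hlt
    have : |q| < |p| := by
      rw [hpI, hqI]
      exact (mul_lt_mul_iff_right₀ hcoef).2 this
    linarith
  refine ⟨?_, ?_, ?_⟩
  · intro p
    rcases le_total (|p|) (2 * Real.sqrt 2 / π) with h | h
    · rw [hsmall _ (by rwa [abs_neg]), hsmall _ h]
    · have h' : 2 * Real.sqrt 2 / π ≤ |(-p)| := by rwa [abs_neg]
      have e : |(-p)| = |p| := abs_neg p
      exact le_antisymm (mono _ _ e.le h') (mono _ _ e.ge h)
  · intro p q hpq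
    rcases le_total (|p|) (2 * Real.sqrt 2 / π) with h | h
    · rw [hsmall _ h]
      rcases le_total (|q|) (2 * Real.sqrt 2 / π) with h2 | h2
      · rw [hsmall _ h2]
      · exact (hbig q h2).1
    · exact mono p q hpq h
  · intro p hp
    obtain ⟨hp0, hpI⟩ := hbig p hp
    set l := Hbar p with hl
    have hlb := aux13_lb κ₀ hp0
    have hub := aux13_ub κ₀ hp0
    have h1 : Real.sqrt 2 * Real.sqrt l ≤ |p| := by
      rw [hpI]
      calc Real.sqrt 2 * Real.sqrt l
          = (Real.sqrt 2 / (2 * π)) * (2 * π * Real.sqrt l) := by field_simp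
        _ ≤ _ := by exact (mul_le_mul_iff_right₀ hcoef).2 hlb
    have h2 : |p| ≤ Real.sqrt 2 * Real.sqrt (1 + l) := by
      rw [hpI]
      calc (Real.sqrt 2 / (2 * π)) * ∫ x in (0:ℝ)..(2*π),
            Real.sqrt (Real.cos (κ₀ * x / 2) ^ 2 + l)
          ≤ (Real.sqrt 2 / (2 * π)) * (2 * π * Real.sqrt (1 + l)) :=
            (mul_le_mul_iff_right₀ hcoef).2 hub
        _ = Real.sqrt 2 * Real.sqrt (1 + l) := by field_simp
    have hsq2 : Real.sqrt 2 ^ 2 = 2 := Real.sq_sqrt (by norm_num)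
    have hsql : Real.sqrt l ^ 2 = l := Real.sq_sqrt hp0
    have hsql1 : Real.sqrt (1 + l) ^ 2 = 1 + l := Real.sq_sqrt (by linarith)
    have habs : |p| ^ 2 = p ^ 2 := sq_abs p
    have hn : 0 ≤ |p| := abs_nonneg p
    constructor
    · nlinarith [mul_le_mul h2 h2 hn (by positivity : (0:ℝ) ≤ Real.sqrt 2 * Real.sqrt (1 + l)), Real.sqrt_nonneg 2, Real.sqrt_nonneg (1 + l)]
    · nlinarith [mul_le_mul h1 h1 (by positivity : (0:ℝ) ≤ Real.sqrt 2 * Real.sqrt l) hn, Real.sqrt_nonneg 2, Real.sqrt_nonneg l]
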